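/- Matching subsets into larger supersets: let k be a natural number and w ≤ w' ≤ k naturals with C(k,w) ≤ C(k,w'), where C(·,·) is the binomial coefficient. Then there exists an injective map f from the collection of w-element subsets of {1,…,k} to the collection of w'-element subsets of {1,…,k} such that S ⊆ f(S) for every w-element subset S. -/

import Mathlib

open Finset
open scoped Classical

/-- The number of `w'`-element supersets of a fixed `w`-element set in `Fin k`. -/
lemma count_supersets (k w w' : ℕ) (hww' : w ≤ w') (hw'k : w' ≤ k)
    (S : Finset (Fin k)) (hS : S.card = w) :
    (Finset.univ.filter
      (fun T : {T : Finset (Fin k) // T.card = w'} => S ⊆ T.1)).card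
      = (k - w).choose (w' - w) := by
  have hcompl : Sᶜ.card = k - w := by
    rw [Finset.card_compl, hS]; simp
  rw [← hcompl, ← Finset.card_powersetCard]
  apply Finset.card_bij (fun T _ => T.1 \ S)
  · intro T hT
    simp only [Finset.mem_filter, Finset.mem_univ, true_and] at hT
    rw [Finset.mem_powersetCard]
    constructor
    · intro x hx
      simp only [Finset.mem_sdiff] at hx
      simp [hx.2]
    · rw [Finset.card_sdiff_of_subset hT, T.2, hS]
  · intro T₁ h₁ T₂ h₂ h
    simp only [Finset.mem_filter, Finset.mem_univ, true_and] at h₁ h₂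
    apply Subtype.ext
    have e1 : T₁.1 = (T₁.1 \ S) ∪ S := by
      rw [Finset.sdiff_union_self_eq_union, Finset.union_eq_left.mpr h₁]
    have e2 : T₂.1 = (T₂.1 \ S) ∪ S := by
      rw [Finset.sdiff_union_self_eq_union, Finset.union_eq_left.mpr h₂]
    rw [e1, e2, h]
  · intro A hA
    rw [Finset.mem_powersetCard] at hA
    have hdisj : Disjoint S A := by
      rw [Finset.disjoint_left]
      intro x hx hxA
      have := hA.1 hxA
      simp at this
      exact this hx
    have hcard : (S ∪ A).card = w' := by
      rw [Finset.card_union_of_disjoint hdisj, hS, hA.2]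
      omega
    refine ⟨⟨S ∪ A, hcard⟩, ?_, ?_⟩
    · simp
    · simp only
      rw [Finset.union_sdiff_cancel_left hdisj]

/-- The number of `w`-element subsets of a fixed `w'`-element set. -/
lemma count_subsets (k w w' : ℕ) (T : Finset (Fin k)) (hT : T.card = w') :
    (Finset.univ.filter
      (fun S : {S : Finset (Fin k) // S.card = w} => S.1 ⊆ T)).card
      = w'.choose w := by
  rw [← hT, ← Finset.card_powersetCard w T]
  apply Finset.card_bij (fun S _ => S.1)
  · intro S hS
    simp only [Finset.mem_filter, Finset.mem_univ, true_and] at hS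
    rw [Finset.mem_powersetCard]
    exact ⟨hS, S.2⟩
  · intro S₁ _ S₂ _ h
    exact Subtype.ext h
  · intro A hA
    rw [Finset.mem_powersetCard] at hA
    exact ⟨⟨A, hA.2⟩, by simp [hA.1], rfl⟩

theorem subset_matching_exists
    (k w w' : ℕ) (hww' : w ≤ w') (hw'k : w' ≤ k)
    (hchoose : k.choose w ≤ k.choose w') :
    ∃ f : {S : Finset (Fin k) // S.card = w} → {S : Finset (Fin k) // S.card = w'},
      Function.Injective f ∧ ∀ S, S.1 ⊆ (f S).1 := by
  set ι := {S : Finset (Fin k) // S.card = w}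
  set α := {S : Finset (Fin k) // S.card = w'}
  set t : ι → Finset α := fun S => Finset.univ.filter (fun T : α => S.1 ⊆ T.1) with ht
  have hc : 0 < (k - w).choose (w' - w) :=
    Nat.choose_pos (by omega)
  have hkey : w'.choose w ≤ (k - w).choose (w' - w) := by
    have hid := Nat.choose_mul (n := k) hww'
    have hpos : 0 < k.choose w' := Nat.choose_pos hw'k
    have h1 : k.choose w' * w'.choose w ≤ k.choose w' * (k - w).choose (w' - w) := by
      calc k.choose w' * w'.choose w = k.choose w * (k - w).choose (w' - w) := hid
        _ ≤ k.choose w' * (k - w).choose (w' - w) :=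
          Nat.mul_le_mul_right _ hchoose
    exact Nat.le_of_mul_le_mul_left h1 hpos
  have hHall : ∀ A : Finset ι, A.card ≤ (A.biUnion t).card := by
    intro A
    set N := A.biUnion t with hN
    have hts : ∀ S ∈ A, t S = N.filter (fun T => S.1 ⊆ T.1) := by
      intro S hS
      ext T
      simp only [ht, Finset.mem_filter, Finset.mem_univ, true_and, hN, Finset.mem_biUnion]
      constructor
      · intro h; exact ⟨⟨S, hS, by simp [ht, h]⟩, h⟩
      · intro h; exact h.2
    have hdouble : A.card * (k - w).choose (w' - w)
        = ∑ T ∈ N, (A.filter (fun S => S.1 ⊆ T.1)).card := by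
      calc A.card * (k - w).choose (w' - w)
          = ∑ S ∈ A, (k - w).choose (w' - w) := by rw [Finset.sum_const, smul_eq_mul]
        _ = ∑ S ∈ A, (t S).card := by
            apply Finset.sum_congr rfl
            intro S hS
            rw [ht]
            exact (count_supersets k w w' hww' hw'k S.1 S.2).symm
        _ = ∑ S ∈ A, (N.filter (fun T => S.1 ⊆ T.1)).card := by
            apply Finset.sum_congr rfl
            intro S hS
            rw [hts S hS]
        _ = ∑ S ∈ A, ∑ T ∈ N, if S.1 ⊆ T.1 then 1 else 0 := by
            simp only [Finset.card_filter]
        _ = ∑ T ∈ N, ∑ S ∈ A, if S.1 ⊆ T.1 then 1 else 0 := Finset.sum_comm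
        _ = ∑ T ∈ N, (A.filter (fun S => S.1 ⊆ T.1)).card := by
            simp only [Finset.card_filter]
    have hbound : ∀ T : α, (A.filter (fun S => S.1 ⊆ T.1)).card ≤ w'.choose w := by
      intro T
      calc (A.filter (fun S => S.1 ⊆ T.1)).card
          ≤ (Finset.univ.filter (fun S : ι => S.1 ⊆ T.1)).card :=
            Finset.card_le_card (Finset.filter_subset_filter _ (Finset.subset_univ A))
        _ = w'.choose w := count_subsets k w w' T.1 T.2
    have : A.card * (k - w).choose (w' - w) ≤ N.card * (k - w).choose (w' - w) := by
      calc A.card * (k - w).choose (w' - w)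
          = ∑ T ∈ N, (A.filter (fun S => S.1 ⊆ T.1)).card := hdouble
        _ ≤ ∑ T ∈ N, w'.choose w := Finset.sum_le_sum (fun T _ => hbound T)
        _ = N.card * w'.choose w := by rw [Finset.sum_const, smul_eq_mul]
        _ ≤ N.card * (k - w).choose (w' - w) := Nat.mul_le_mul_left _ hkey
    exact Nat.le_of_mul_le_mul_right this hc
  obtain ⟨f, hinj, hf⟩ := (Finset.all_card_le_biUnion_card_iff_exists_injective t).mp hHall
  refine ⟨f, hinj, fun S => ?_⟩
  have := hf S
  simp only [ht, Finset.mem_filter] at this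
  exact this.2
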